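/- Let k be algebraically closed with char k ≠ 2, 3 and ζ₃ ∈ k a primitive third root of unity. The Hesse group G₂₁₆ ⊂ PGL(3,k), generated by σ = Diag(1, ζ₃, ζ₃²), τ = the cyclic permutation (x₀x₁x₂), σ₁ = [[1,1,1],[1,ζ₃,ζ₃²],[1,ζ₃²,ζ₃]], and σ₂ = [[ζ₃,0,0],[0,0,1],[0,1,0]], acts on the Hesse pencil parameter (μ₀ : μ₁) ∈ ℙ¹ by: σ and τ act trivially, σ₁·(μ₀:μ₁) = (μ₁ − μ₀ : μ₁ + 2μ₀), and σ₂·(μ₀:μ₁) = (μ₀ : ζ₃²μ₁). -/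
import Mathlib


open MvPolynomial

/-- The Hesse cubic μ₀(x₀³ + x₁³ + x₂³) - 3μ₁x₀x₁x₂. -/
noncomputable def hesse {k : Type*} [Field k] (μ₀ μ₁ : k) : MvPolynomial (Fin 3) k :=
  C μ₀ * (X 0 ^ 3 + X 1 ^ 3 + X 2 ^ 3) - C (3 * μ₁) * (X 0 * X 1 * X 2)

lemma hesse_key {R : Type*} [CommRing R] (z m0 m1 a b c : R) (h : z ^ 2 + z + 1 = 0) :
    (m1 - m0) * ((a + b + c) ^ 3 + (a + z * b + z ^ 2 * c) ^ 3 + (a + z ^ 2 * b + z * c) ^ 3)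
      - 3 * (m1 + 2 * m0) * ((a + b + c) * (a + z * b + z ^ 2 * c) * (a + z ^ 2 * b + z * c))
      = -9 * (m0 * (a ^ 3 + b ^ 3 + c ^ 3) - 3 * m1 * (a * b * c)) := by
  linear_combination ((1)*m1*c^3 + (3)*m1*b*c^2 + (3)*m1*b^2*c + (1)*m1*b^3 + (3)*m1*a*c^2 + (-21)*m1*a*b*c + (3)*m1*a*b^2 + (8)*m0*c^3 + (-3)*m0*b*c^2 + (-3)*m0*b^2*c + (8)*m0*b^3 + (-3)*m0*a*c^2 + (-6)*m0*a*b*c + (-3)*m0*a*b^2 + (-9)*m0*a^2*c + (-9)*m0*a^2*b + (-1)*z*m1*c^3 + (-3)*z*m1*b*c^2 + (-3)*z*m1*b^2*c + (-1)*z*m1*b^3 + (-6)*z*m1*a*c^2 + (15)*z*m1*a*b*c + (-6)*z*m1*a*b^2 + (-8)*z*m0*c^3 + (3)*z*m0*b*c^2 + (3)*z*m0*b^2*c + (-8)*z*m0*b^3 + (-3)*z*m0*a*c^2 + (-6)*z*m0*a*b*c + (-3)*z*m0*a*b^2 + (-3)*z^2*m1*b*c^2 + (-3)*z^2*m1*b^2*c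 + (3)*z^2*m1*a*c^2 + (-3)*z^2*m1*a*b*c + (3)*z^2*m1*a*b^2 + (-6)*z^2*m0*b*c^2 + (-6)*z^2*m0*b^2*c + (-3)*z^2*m0*a*c^2 + (-6)*z^2*m0*a*b*c + (-3)*z^2*m0*a*b^2 + (-1)*z^3*m1*c^3 + (3)*z^3*m1*b*c^2 + (3)*z^3*m1*b^2*c + (-1)*z^3*m1*b^3 + (1)*z^3*m0*c^3 + (-3)*z^3*m0*b*c^2 + (-3)*z^3*m0*b^2*c + (1)*z^3*m0*b^3 + (1)*z^4*m1*c^3 + (1)*z^4*m1*b^3 + (-1)*z^4*m0*c^3 + (-1)*z^4*m0*b^3) * h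

/-- The generators σ = Diag(1,ζ₃,ζ₃²), τ = cyclic permutation,
σ₁ = [[1,1,1],[1,ζ₃,ζ₃²],[1,ζ₃²,ζ₃]], σ₂ = [[ζ₃,0,0],[0,0,1],[0,1,0]] of the
Hesse group act on the Hesse pencil parameter (μ₀ : μ₁) by: σ and τ trivially,
σ₁·(μ₀:μ₁) = (μ₁ - μ₀ : μ₁ + 2μ₀), and σ₂·(μ₀:μ₁) = (μ₀ : ζ₃²μ₁).
(Here g·F_μ = F_μ ∘ g⁻¹ ~ F_ν is expressed as F_ν ∘ g = c·F_μ, c ≠ 0.) -/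
theorem stmt16 {k : Type*} [Field k] [IsAlgClosed k]
    (h2 : (2 : k) ≠ 0) (h3 : (3 : k) ≠ 0)
    (ζ : k) (hζ : IsPrimitiveRoot ζ 3) (μ₀ μ₁ : k) :
    (∃ c : k, c ≠ 0 ∧
      aeval (R := k) (fun i => ∑ j, C ((Matrix.diagonal ![1, ζ, ζ ^ 2]) i j) * X j)
        (hesse μ₀ μ₁) = c • hesse μ₀ μ₁) ∧
    (∃ c : k, c ≠ 0 ∧
      aeval (R := k) (fun i => ∑ j, C ((!![0,0,1;1,0,0;0,1,0] : Matrix (Fin 3) (Fin 3) k) i j) * X j)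
        (hesse μ₀ μ₁) = c • hesse μ₀ μ₁) ∧
    (∃ c : k, c ≠ 0 ∧
      aeval (R := k) (fun i => ∑ j, C ((!![1,1,1;1,ζ,ζ^2;1,ζ^2,ζ] : Matrix (Fin 3) (Fin 3) k) i j) * X j)
        (hesse (μ₁ - μ₀) (μ₁ + 2 * μ₀)) = c • hesse μ₀ μ₁) ∧
    (∃ c : k, c ≠ 0 ∧
      aeval (R := k) (fun i => ∑ j, C ((!![ζ,0,0;0,0,1;0,1,0] : Matrix (Fin 3) (Fin 3) k) i j) * X j)
        (hesse μ₀ (ζ ^ 2 * μ₁)) = c • hesse μ₀ μ₁) := by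
  have hζ3 : ζ ^ 3 = 1 := hζ.pow_eq_one
  have hne : ζ ≠ 1 := hζ.ne_one (by norm_num)
  have hsum : ζ ^ 2 + ζ + 1 = 0 := by
    have h0 : (ζ - 1) * (ζ ^ 2 + ζ + 1) = 0 := by linear_combination hζ3
    rcases mul_eq_zero.mp h0 with h | h
    · exact absurd (sub_eq_zero.mp h) hne
    · exact h
  have hC3 : (C ζ : MvPolynomial (Fin 3) k) ^ 3 = 1 := by
    rw [← map_pow, hζ3, map_one]
  have hCsum : (C ζ : MvPolynomial (Fin 3) k) ^ 2 + C ζ + 1 = 0 := by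
    rw [← map_pow, ← map_one (C : k →+* MvPolynomial (Fin 3) k)]
    rw [← map_add, ← map_add, hsum, map_zero]
  have key := hesse_key (C ζ) (C μ₀) (C μ₁) (X 0 : MvPolynomial (Fin 3) k) (X 1) (X 2) hCsum
  refine ⟨⟨1, one_ne_zero, ?_⟩, ⟨1, one_ne_zero, ?_⟩,
    ⟨-9, fun h => h3 (mul_self_eq_zero.mp (by linear_combination -h)), ?_⟩,
    ⟨1, one_ne_zero, ?_⟩⟩
  · simp only [hesse, map_sub, map_mul, map_add, map_pow, aeval_X, aeval_C, map_ofNat,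
      MvPolynomial.smul_eq_C_mul, map_neg, map_one, map_zero, algebraMap_eq,
      Fin.sum_univ_three, Matrix.diagonal, Matrix.cons_val', Matrix.cons_val_zero,
      Matrix.cons_val_one, Matrix.head_cons, Matrix.of_apply, Matrix.cons_val_fin_one,
      Matrix.head_fin_const, Matrix.empty_val', Matrix.cons_val_two, Matrix.tail_cons,
      Fin.isValue, one_smul, if_true, one_mul, zero_mul, mul_one, mul_zero, add_zero, zero_add,
      Fin.reduceEq, reduceIte, reduceCtorEq]
    linear_combination (C μ₀ * (X 1 : MvPolynomial (Fin 3) k) ^ 3 +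
        C μ₀ * (C ζ ^ 3 + 1) * X 2 ^ 3 - 3 * C μ₁ * X 0 * X 1 * X 2) * hC3
  · simp only [hesse, map_sub, map_mul, map_add, map_pow, aeval_X, aeval_C, map_ofNat,
      MvPolynomial.smul_eq_C_mul, map_neg, map_one, map_zero, algebraMap_eq,
      Fin.sum_univ_three, Matrix.diagonal, Matrix.cons_val', Matrix.cons_val_zero,
      Matrix.cons_val_one, Matrix.head_cons, Matrix.of_apply, Matrix.cons_val_fin_one,
      Matrix.head_fin_const, Matrix.empty_val', Matrix.cons_val_two, Matrix.tail_cons,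
      Fin.isValue, one_smul, if_true, one_mul, zero_mul, mul_one, mul_zero, add_zero, zero_add,
      Fin.reduceEq, reduceIte, reduceCtorEq]
    ring
  · simp only [hesse, map_sub, map_mul, map_add, map_pow, aeval_X, aeval_C, map_ofNat,
      MvPolynomial.smul_eq_C_mul, map_neg, map_one, map_zero, algebraMap_eq,
      Fin.sum_univ_three, Matrix.diagonal, Matrix.cons_val', Matrix.cons_val_zero,
      Matrix.cons_val_one, Matrix.head_cons, Matrix.of_apply, Matrix.cons_val_fin_one,
      Matrix.head_fin_const, Matrix.empty_val', Matrix.cons_val_two, Matrix.tail_cons,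
      Fin.isValue, one_smul, if_true, one_mul, zero_mul, mul_one, mul_zero, add_zero, zero_add,
      Fin.reduceEq, reduceIte, reduceCtorEq]
    linear_combination key
  · simp only [hesse, map_sub, map_mul, map_add, map_pow, aeval_X, aeval_C, map_ofNat,
      MvPolynomial.smul_eq_C_mul, map_neg, map_one, map_zero, algebraMap_eq,
      Fin.sum_univ_three, Matrix.diagonal, Matrix.cons_val', Matrix.cons_val_zero,
      Matrix.cons_val_one, Matrix.head_cons, Matrix.of_apply, Matrix.cons_val_fin_one,
      Matrix.head_fin_const, Matrix.empty_val', Matrix.cons_val_two, Matrix.tail_cons,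
      Fin.isValue, one_smul, if_true, one_mul, zero_mul, mul_one, mul_zero, add_zero, zero_add,
      Fin.reduceEq, reduceIte, reduceCtorEq]
    linear_combination (C μ₀ * (X 0 : MvPolynomial (Fin 3) k) ^ 3 -
        3 * C μ₁ * X 0 * X 1 * X 2) * hC3
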